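/- Let R be a unital associative algebra over a field F, let q ∈ F with q ≠ 0, and let A, B ∈ R satisfy A·B − q·B·A = 1. Suppose q^p = 1 and {p}_q = 1 + q + ⋯ + q^{p−1} = 0 for some positive integer p. Then A^p commutes with B, i.e., A^p·B = B·A^p. -/

import Mathlib

theorem Apow_p_comm_B {F : Type*} [Field F] {R : Type*} [Ring R] [Algebra F R]
    (q : F) (hq0 : q ≠ 0) (A B : R) (h : A * B - q • (B * A) = 1)
    (p : ℕ) (hp : 0 < p) (hqp : q ^ p = 1)
    (hsum : (∑ i ∈ Finset.range p, q ^ i) = 0) :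
    A ^ p * B = B * A ^ p := by
  have hAB : A * B = q • (B * A) + 1 := by linear_combination (norm := noncomm_ring) h
  have aux : ∀ n : ℕ, A ^ (n+1) * B
      = q ^ (n+1) • (B * A ^ (n+1)) + (∑ i ∈ Finset.range (n+1), q ^ i) • A ^ n := by
    intro n
    induction n with
    | zero => simpa using hAB
    | succ n ih =>
      have key : A ^ (n+2) * B = A * (A ^ (n+1) * B) := by
        rw [pow_succ' A (n+1), mul_assoc]
      rw [key, ih, mul_add, mul_smul_comm, mul_smul_comm, ← mul_assoc, hAB,
        Finset.sum_range_succ (n := n+1), add_smul]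
      rw [add_mul, smul_mul_assoc, one_mul, smul_add, smul_smul]
      have h1 : B * A * A ^ (n+1) = B * A ^ (n+1+1) := by
        rw [mul_assoc, ← pow_succ' A (n+1)]
      have h2 : A * A ^ n = A ^ (n+1) := (pow_succ' A n).symm
      rw [h1, h2, ← pow_succ]
      abel
  obtain ⟨m, rfl⟩ : ∃ m, p = m + 1 := ⟨p - 1, (Nat.succ_pred_eq_of_pos hp).symm⟩
  rw [aux m, hsum, hqp, one_smul, zero_smul, add_zero]
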